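/- Let i, j, N be integers with 2 ≤ i ≤ j and 2j ≤ N. Then, as real numbers, gcd(C(N,i), C(N,j)) ≥ ((N−i+2)(N−i+1)/(i(i−1))) · √(2^(2i−3)(i−1)/N³), and consequently gcd(C(N,i), C(N,j)) ≥ √N · 2^(i−7/2) / (i·√(i−1)). -/

import Mathlib

open Finset


lemma carry_iff (P x s : ℕ) (hP : 2 ≤ P) (hxs : x ≤ s) :
    P ≤ x % P + (s - x) % P ↔ s % P < x % P := by
  have hP0 : 0 < P := by omega
  have hu : x % P < P := Nat.mod_lt _ hP0
  have hv : (s - x) % P < P := Nat.mod_lt _ hP0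
  have hn : s % P < P := Nat.mod_lt _ hP0
  have h : (x % P + (s - x) % P) % P = s % P := by
    rw [← Nat.add_mod]; congr 1; omega
  rcases lt_or_ge (x % P + (s - x) % P) P with h1 | h1
  · rw [Nat.mod_eq_of_lt h1] at h; omega
  · have h2 : x % P + (s - x) % P - P < P := by omega
    rw [Nat.mod_eq_sub_mod h1, Nat.mod_eq_of_lt h2] at h; omega

lemma mod_pred {P i : ℕ} (hP : 0 < P) (hi : 1 ≤ i) (hr : 1 ≤ i % P) :
    (i - 1) % P = i % P - 1 := by
  have hd := Nat.div_add_mod i P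
  have h1 : i - 1 = P * (i / P) + (i % P - 1) := by omega
  rw [h1, Nat.mul_add_mod]
  exact Nat.mod_eq_of_lt (by have := Nat.mod_lt i hP; omega)

lemma level (P i j N : ℕ) (hP : 2 ≤ P) (hi : 2 ≤ i) (hij : i ≤ j) (hjN : 2 * j ≤ N)
    (hz : P ≤ i % P + (N - i) % P)
    (hw : ¬ P ≤ j % P + (N - j) % P) :
    ((P ≤ (i-1) % P + (j-(i-1)) % P) ∧ (P ≤ (i-1) % P + ((N-j)-(i-1)) % P))
    ∨ ((P ≤ (i-1) % P + (j-(i-1)) % P) ∧ P ∣ (N-(i-1)))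
    ∨ ((P ≤ (i-1) % P + ((N-j)-(i-1)) % P) ∧ P ∣ (N-(i-1)))
    ∨ (P ∣ (N-(i-1)) ∧ P ∣ (i-1)) := by
  have hP0 : 0 < P := by omega
  have hiN : i ≤ N := by omega
  -- n < r
  have hz' : N % P < i % P := (carry_iff P i N hP hiN).mp hz
  have hr1 : 1 ≤ i % P := by omega
  -- a + c = n
  have hsum : j % P + (N - j) % P = N % P := by
    have h : (j % P + (N - j) % P) % P = N % P := by
      rw [← Nat.add_mod]; congr 1; omega
    rw [Nat.mod_eq_of_lt (by omega)] at h
    exact h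
  -- rewrite (i-1) % P
  have hr' : (i - 1) % P = i % P - 1 := mod_pred hP0 (by omega) hr1
  -- cond1 iff
  have hc1 : (P ≤ (i-1) % P + (j-(i-1)) % P) ↔ j % P < i % P - 1 := by
    rw [carry_iff P (i-1) j hP (by omega), hr']
  have hc2 : (P ≤ (i-1) % P + ((N-j)-(i-1)) % P) ↔ (N - j) % P < i % P - 1 := by
    rw [carry_iff P (i-1) (N-j) hP (by omega), hr']
  have hc3 : P ∣ (N - (i-1)) ↔ N % P = i % P - 1 := by
    rw [← Nat.modEq_iff_dvd' (by omega : i - 1 ≤ N)]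
    unfold Nat.ModEq
    rw [hr']
    constructor <;> intro h <;> omega
  have hc4 : P ∣ (i - 1) ↔ i % P - 1 = 0 := by
    rw [Nat.dvd_iff_mod_eq_zero, hr']
  -- case analysis
  rcases lt_or_eq_of_le (by omega : N % P ≤ i % P - 1) with hcase | hcase
  · exact Or.inl ⟨hc1.mpr (by omega), hc2.mpr (by omega)⟩
  · rcases Nat.lt_or_ge 1 (i % P) with hr2 | hr2
    · rcases lt_or_eq_of_le (by omega : j % P ≤ i % P - 1) with ha | ha
      · exact Or.inr (Or.inl ⟨hc1.mpr (by omega), hc3.mpr (by omega)⟩)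
      · exact Or.inr (Or.inr (Or.inl ⟨hc2.mpr (by omega), hc3.mpr (by omega)⟩))
    · exact Or.inr (Or.inr (Or.inr ⟨hc3.mpr (by omega), hc4.mpr (by omega)⟩))

lemma perprime (i j N : ℕ) (hi : 2 ≤ i) (hij : i ≤ j) (hjN : 2 * j ≤ N)
    (p : ℕ) (hp : p.Prime) :
    2 * ((N.choose i).factorization p - (N.choose j).factorization p)
      ≤ (j.choose (i-1)).factorization p + ((N-j).choose (i-1)).factorization p
        + (N-(i-1)).factorization p + (i-1).factorization p := by
  haveI : Fact p.Prime := ⟨hp⟩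
  have hp1 : 1 < p := hp.one_lt
  set b := N + 1 with hb
  have hNb : Nat.log p N < b := by
    apply Nat.log_lt_of_lt_pow (by omega)
    calc N < p ^ N := Nat.lt_pow_self hp1
    _ ≤ p ^ b := Nat.pow_le_pow_right (by omega) (by omega)
  have hjb : Nat.log p j < b := lt_of_le_of_lt (Nat.log_mono_right (by omega)) hNb
  have hnjb : Nat.log p (N - j) < b := lt_of_le_of_lt (Nat.log_mono_right (by omega)) hNb
  -- the filters
  set Z := (Ico 1 b).filter (fun t => p ^ t ≤ i % p ^ t + (N - i) % p ^ t) with hZ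
  set W := (Ico 1 b).filter (fun t => p ^ t ≤ j % p ^ t + (N - j) % p ^ t) with hW
  set X := (Ico 1 b).filter (fun t => p ^ t ≤ (i-1) % p ^ t + (j - (i-1)) % p ^ t) with hX
  set Y := (Ico 1 b).filter (fun t => p ^ t ≤ (i-1) % p ^ t + ((N-j) - (i-1)) % p ^ t) with hY
  set D := (Ico 1 b).filter (fun t => p ^ t ∣ (N - (i-1))) with hD
  set E := (Ico 1 b).filter (fun t => p ^ t ∣ (i-1)) with hE
  have hZc : (N.choose i).factorization p = Z.card := by
    rw [Nat.factorization_def _ hp, padicValNat_choose (by omega : i ≤ N) hNb]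
  have hWc : (N.choose j).factorization p = W.card := by
    rw [Nat.factorization_def _ hp, padicValNat_choose (by omega : j ≤ N) hNb]
  have hXc : (j.choose (i-1)).factorization p = X.card := by
    rw [Nat.factorization_def _ hp, padicValNat_choose (by omega : i - 1 ≤ j) hjb]
  have hYc : ((N-j).choose (i-1)).factorization p = Y.card := by
    rw [Nat.factorization_def _ hp, padicValNat_choose (by omega : i - 1 ≤ N - j) hnjb]
  have hDc : D.card ≤ (N-(i-1)).factorization p := by
    have hsub : D ⊆ Icc 1 ((N-(i-1)).factorization p) := by
      intro t ht
      rw [hD, mem_filter, mem_Ico] at ht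
      rw [mem_Icc]
      exact ⟨ht.1.1, (hp.pow_dvd_iff_le_factorization (by omega)).mp ht.2⟩
    calc D.card ≤ (Icc 1 ((N-(i-1)).factorization p)).card := card_le_card hsub
    _ = (N-(i-1)).factorization p := by rw [Nat.card_Icc]; omega
  have hEc : E.card ≤ (i-1).factorization p := by
    have hsub : E ⊆ Icc 1 ((i-1).factorization p) := by
      intro t ht
      rw [hE, mem_filter, mem_Ico] at ht
      rw [mem_Icc]
      exact ⟨ht.1.1, (hp.pow_dvd_iff_le_factorization (by omega)).mp ht.2⟩
    calc E.card ≤ (Icc 1 ((i-1).factorization p)).card := card_le_card hsub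
    _ = (i-1).factorization p := by rw [Nat.card_Icc]; omega
  -- the counting step
  have hcount : 2 * (Z \ W).card ≤ X.card + Y.card + D.card + E.card := by
    have hkey : ∀ t ∈ Z \ W,
        2 ≤ (if t ∈ X then 1 else 0) + (if t ∈ Y then 1 else 0)
          + (if t ∈ D then 1 else 0) + (if t ∈ E then 1 else 0) := by
      intro t ht
      rw [mem_sdiff] at ht
      obtain ⟨htZ, htW⟩ := ht
      rw [hZ, mem_filter] at htZ
      obtain ⟨htI, htz⟩ := htZ
      have htw : ¬ p ^ t ≤ j % p ^ t + (N - j) % p ^ t := by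
        intro hcon
        exact htW (by rw [hW, mem_filter]; exact ⟨htI, hcon⟩)
      have hPt : 2 ≤ p ^ t := by
        calc 2 ≤ p := by omega
        _ = p ^ 1 := (pow_one p).symm
        _ ≤ p ^ t := Nat.pow_le_pow_right (by omega) (by rw [mem_Ico] at htI; omega)
      have := level (p ^ t) i j N hPt hi hij hjN htz htw
      have hmX : (p ^ t ≤ (i-1) % p ^ t + (j - (i-1)) % p ^ t) → t ∈ X := fun h => by
        rw [hX, mem_filter]; exact ⟨htI, h⟩
      have hmY : (p ^ t ≤ (i-1) % p ^ t + ((N-j) - (i-1)) % p ^ t) → t ∈ Y := fun h => by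
        rw [hY, mem_filter]; exact ⟨htI, h⟩
      have hmD : (p ^ t ∣ (N - (i-1))) → t ∈ D := fun h => by
        rw [hD, mem_filter]; exact ⟨htI, h⟩
      have hmE : (p ^ t ∣ (i-1)) → t ∈ E := fun h => by
        rw [hE, mem_filter]; exact ⟨htI, h⟩
      rcases this with ⟨h1, h2⟩ | ⟨h1, h2⟩ | ⟨h1, h2⟩ | ⟨h1, h2⟩
      · simp only [hmX h1, hmY h2, if_pos]; split_ifs <;> omega
      · simp only [hmX h1, hmD h2, if_pos]; split_ifs <;> omega
      · simp only [hmY h1, hmD h2, if_pos]; split_ifs <;> omega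
      · simp only [hmD h1, hmE h2, if_pos]; split_ifs <;> omega
    calc 2 * (Z \ W).card = ∑ _t ∈ Z \ W, 2 := by rw [Finset.sum_const, smul_eq_mul]; ring
    _ ≤ ∑ t ∈ Z \ W, ((if t ∈ X then 1 else 0) + (if t ∈ Y then 1 else 0)
          + (if t ∈ D then 1 else 0) + (if t ∈ E then 1 else 0)) := Finset.sum_le_sum hkey
    _ = ((Z \ W).filter (· ∈ X)).card + ((Z \ W).filter (· ∈ Y)).card
        + ((Z \ W).filter (· ∈ D)).card + ((Z \ W).filter (· ∈ E)).card := by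
        rw [Finset.card_filter, Finset.card_filter, Finset.card_filter, Finset.card_filter,
          ← Finset.sum_add_distrib, ← Finset.sum_add_distrib, ← Finset.sum_add_distrib]
    _ ≤ X.card + Y.card + D.card + E.card := by
        have f1 : ((Z \ W).filter (· ∈ X)).card ≤ X.card :=
          Finset.card_le_card (fun x hx => (Finset.mem_filter.mp hx).2)
        have f2 : ((Z \ W).filter (· ∈ Y)).card ≤ Y.card :=
          Finset.card_le_card (fun x hx => (Finset.mem_filter.mp hx).2)
        have f3 : ((Z \ W).filter (· ∈ D)).card ≤ D.card :=
          Finset.card_le_card (fun x hx => (Finset.mem_filter.mp hx).2)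
        have f4 : ((Z \ W).filter (· ∈ E)).card ≤ E.card :=
          Finset.card_le_card (fun x hx => (Finset.mem_filter.mp hx).2)
        omega
  have hsd : Z.card ≤ (Z \ W).card + W.card := Finset.card_le_card_sdiff_add_card
  rw [hZc, hWc, hXc, hYc]
  omega

lemma asq_dvd (i j N : ℕ) (hi : 2 ≤ i) (hij : i ≤ j) (hjN : 2 * j ≤ N) :
    ((N.choose i) / ((N.choose i).gcd (N.choose j)))^2
      ∣ (i-1) * ((N-(i-1)) * (j.choose (i-1) * (N-j).choose (i-1))) := by
  set g := (N.choose i).gcd (N.choose j) with hg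
  set a := (N.choose i) / g with ha
  have hCNi : N.choose i ≠ 0 := Nat.choose_pos (by omega : i ≤ N) |>.ne'
  have hCNj : N.choose j ≠ 0 := Nat.choose_pos (by omega : j ≤ N) |>.ne'
  have hgdvd : g ∣ N.choose i := Nat.gcd_dvd_left _ _
  have hga : g * a = N.choose i := Nat.mul_div_cancel' hgdvd
  have hg0 : g ≠ 0 := fun h => hCNi (by rw [← hga, h, zero_mul])
  have ha0 : a ≠ 0 := fun h => hCNi (by rw [← hga, h, mul_zero])
  have hCj : j.choose (i-1) ≠ 0 := Nat.choose_pos (by omega : i - 1 ≤ j) |>.ne'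
  have hCnj : (N-j).choose (i-1) ≠ 0 := Nat.choose_pos (by omega : i - 1 ≤ N - j) |>.ne'
  have hM0 : (i-1) * ((N-(i-1)) * (j.choose (i-1) * (N-j).choose (i-1))) ≠ 0 := by
    apply mul_ne_zero (by omega)
    apply mul_ne_zero (by omega)
    exact mul_ne_zero hCj hCnj
  rw [← Nat.factorization_le_iff_dvd (pow_ne_zero 2 ha0) hM0]
  intro p
  by_cases hp : p.Prime
  · -- valuation of a
    have hfa : (a^2).factorization p = 2 * a.factorization p := by
      rw [Nat.factorization_pow]; simp [mul_comm]
    have hmul : (N.choose i).factorization p = g.factorization p + a.factorization p := by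
      rw [← hga, Nat.factorization_mul hg0 ha0]; simp
    have hgf : g.factorization p
        = min ((N.choose i).factorization p) ((N.choose j).factorization p) := by
      rw [hg, Nat.factorization_gcd hCNi hCNj]; simp [Finsupp.inf_apply]
    have hMf : ((i-1) * ((N-(i-1)) * (j.choose (i-1) * (N-j).choose (i-1)))).factorization p
        = (i-1).factorization p + ((N-(i-1)).factorization p
          + ((j.choose (i-1)).factorization p + ((N-j).choose (i-1)).factorization p)) := by
      rw [Nat.factorization_mul (by omega) (mul_ne_zero (by omega) (mul_ne_zero hCj hCnj)),
        Nat.factorization_mul (by omega) (mul_ne_zero hCj hCnj),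
        Nat.factorization_mul hCj hCnj]
      simp
    have := perprime i j N hi hij hjN p hp
    rw [hfa, hMf]
    omega
  · rw [Nat.factorization_eq_zero_of_not_prime _ hp]
    exact Nat.zero_le _

lemma four_mul_le_sq (a b : ℕ) : 4 * (a * b) ≤ (a + b)^2 := by
  zify
  nlinarith [sq_nonneg ((a:ℤ) - b)]

lemma L1 (N j : ℕ) : ∀ k, k ≤ j → j + k ≤ N →
    4^k * (k.factorial)^2 * (j.choose k * (N-j).choose k)
      ≤ (∏ t ∈ range k, (N - 2*t))^2 := by
  intro k
  induction k with
  | zero => simp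
  | succ k IH =>
    intro hkj hkN
    have IH' := IH (by omega) (by omega)
    have h1 : j.choose (k+1) * (k+1) = j.choose k * (j - k) := Nat.choose_succ_right_eq j k
    have h2 : (N-j).choose (k+1) * (k+1) = (N-j).choose k * ((N-j) - k) :=
      Nat.choose_succ_right_eq _ k
    have e1 : 4^(k+1) * ((k+1).factorial)^2 * (j.choose (k+1) * (N-j).choose (k+1))
        = (4^k * (k.factorial)^2) * (4 * ((j.choose (k+1) * (k+1)) * ((N-j).choose (k+1) * (k+1)))) := by
      rw [Nat.factorial_succ, pow_succ]
      ring
    have e2 : (j.choose (k+1) * (k+1)) * ((N-j).choose (k+1) * (k+1))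
        = (j.choose k * (N-j).choose k) * ((j-k) * ((N-j)-k)) := by
      rw [h1, h2]; ring
    have amgm : 4 * ((j-k) * ((N-j)-k)) ≤ (N - 2*k)^2 := by
      have hs : (j-k) + ((N-j)-k) = N - 2*k := by omega
      calc 4 * ((j-k) * ((N-j)-k)) ≤ ((j-k) + ((N-j)-k))^2 := four_mul_le_sq _ _
      _ = (N - 2*k)^2 := by rw [hs]
    calc 4^(k+1) * ((k+1).factorial)^2 * (j.choose (k+1) * (N-j).choose (k+1))
        = (4^k * (k.factorial)^2 * (j.choose k * (N-j).choose k)) * (4 * ((j-k) * ((N-j)-k))) := by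
          rw [e1, e2]; ring
      _ ≤ (∏ t ∈ range k, (N - 2*t))^2 * (N - 2*k)^2 := Nat.mul_le_mul IH' amgm
      _ = (∏ t ∈ range (k+1), (N - 2*t))^2 := by rw [prod_range_succ, mul_pow]

lemma claim_nat (i j N : ℕ) (hi : 2 ≤ i) (hij : i ≤ j) (hjN : 2 * j ≤ N) :
    (N-i+2)^2 * (N-i+1)^3 * 2^(2*i-3) * (j.choose (i-1) * (N-j).choose (i-1))
      ≤ i^2 * N^3 * (N.choose i)^2 := by
  set c := 4^(i-1) * ((i-1).factorial)^2 with hc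
  have hc0 : 0 < c := by positivity
  apply Nat.le_of_mul_le_mul_right _ hc0
  set F1 := ∏ t ∈ range (i-1), (N - 2*t) with hF1
  set F2 := N.descFactorial (i-2) with hF2
  have hL1 : c * (j.choose (i-1) * (N-j).choose (i-1)) ≤ F1^2 := by
    rw [hc]
    exact L1 N j (i-1) (by omega) (by omega)
  have hL2 : F1 ≤ N * F2 := by
    have e : F1 = (∏ t ∈ range (i-2), (N - 2*(t+1))) * (N - 2*0) := by
      rw [hF1, show i - 1 = (i-2) + 1 from by omega, prod_range_succ']
    have hle : (∏ t ∈ range (i-2), (N - 2*(t+1))) ≤ ∏ t ∈ range (i-2), (N - t) := by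
      apply Finset.prod_le_prod'
      intro t _
      omega
    calc F1 = (∏ t ∈ range (i-2), (N - 2*(t+1))) * N := by rw [e]; norm_num
    _ ≤ (∏ t ∈ range (i-2), (N - t)) * N := Nat.mul_le_mul_right N hle
    _ = N * F2 := by rw [hF2, Nat.descFactorial_eq_prod_range]; ring
  have hF0 : N.descFactorial i = (N-(i-1)) * ((N-(i-2)) * F2) := by
    rw [hF2]
    obtain ⟨m, rfl⟩ : ∃ m, i = m + 2 := ⟨i - 2, by omega⟩
    rw [show m + 2 - 1 = m + 1 from rfl, show m + 2 - 2 = m from rfl,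
      Nat.descFactorial_succ, Nat.descFactorial_succ]
  have hdesc : N.descFactorial i = i.factorial * N.choose i :=
    Nat.descFactorial_eq_factorial_mul_choose N i
  -- RHS * c = N^3 * 4^(i-1) * (i! * C(N,i))^2
  have eR : i^2 * N^3 * (N.choose i)^2 * c = N^3 * 4^(i-1) * (N.descFactorial i)^2 := by
    rw [hdesc, hc]
    obtain ⟨m, rfl⟩ : ∃ m, i = m + 1 := ⟨i - 1, by omega⟩
    rw [show m + 1 - 1 = m from rfl, Nat.factorial_succ]
    ring
  have eR2 : i^2 * N^3 * (N.choose i)^2 * c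
      = N^3 * 4^(i-1) * ((N-(i-1))^2 * ((N-(i-2))^2 * F2^2)) := by
    rw [eR, hF0]; ring
  -- LHS * c ≤ A2^2 A1^3 2^(2i-3) F1^2 ≤ A2^2 A1^3 2^(2i-3) N^2 F2^2
  calc (N-i+2)^2 * (N-i+1)^3 * 2^(2*i-3) * (j.choose (i-1) * (N-j).choose (i-1)) * c
      = (N-i+2)^2 * (N-i+1)^3 * 2^(2*i-3) * (c * (j.choose (i-1) * (N-j).choose (i-1))) := by ring
    _ ≤ (N-i+2)^2 * (N-i+1)^3 * 2^(2*i-3) * F1^2 := Nat.mul_le_mul_left _ hL1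
    _ ≤ (N-i+2)^2 * (N-i+1)^3 * 2^(2*i-3) * (N * F2)^2 := by
        apply Nat.mul_le_mul_left
        exact Nat.pow_le_pow_left hL2 2
    _ ≤ i^2 * N^3 * (N.choose i)^2 * c := by
        rw [eR2]
        have hA2 : N-i+2 = N-(i-2) := by omega
        have hA1 : N-i+1 = N-(i-1) := by omega
        rw [hA2, hA1]
        have h4 : (4:ℕ)^(i-1) = 2^(2*i-2) := by
          rw [show (4:ℕ) = 2^2 by norm_num, ← pow_mul]
          congr 1
          omega
        rw [h4]
        have h2 : (2:ℕ)^(2*i-2) = 2 * 2^(2*i-3) := by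
          rw [← pow_succ']
          congr 1
          omega
        rw [h2]
        -- goal: A2^2 * A1^3 * 2^(2i-3) * (N*F2)^2 ≤ N^3 * (2*2^(2i-3)) * (A1^2 * (A2^2 * F2^2))
        have hA1N : N-(i-1) ≤ N := by omega
        calc (N-(i-2))^2 * (N-(i-1))^3 * 2^(2*i-3) * (N * F2)^2
            = (N-(i-1)) * ((N-(i-2))^2 * (N-(i-1))^2 * 2^(2*i-3) * N^2 * F2^2) := by ring
          _ ≤ N * ((N-(i-2))^2 * (N-(i-1))^2 * 2^(2*i-3) * N^2 * F2^2) :=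
              Nat.mul_le_mul_right _ hA1N
          _ = N^3 * 2^(2*i-3) * ((N-(i-1))^2 * ((N-(i-2))^2 * F2^2)) := by ring
          _ ≤ N^3 * (2 * 2^(2*i-3)) * ((N-(i-1))^2 * ((N-(i-2))^2 * F2^2)) := by
              apply Nat.mul_le_mul_right
              apply Nat.mul_le_mul_left
              exact Nat.le_mul_of_pos_left _ (by norm_num)

private lemma sq_le_sq'' {x y : ℝ} (hx : 0 ≤ x) (hy : 0 ≤ y) (h : x^2 ≤ y^2) : x ≤ y := by
  nlinarith [sq_nonneg (x - y), sq_nonneg (x + y)]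

set_option maxHeartbeats 1000000 in
theorem stmt_2 (i j N : ℕ) (hi : 2 ≤ i) (hij : i ≤ j) (hjN : 2 * j ≤ N) :
    (((N : ℝ) - i + 2) * ((N : ℝ) - i + 1) / ((i : ℝ) * ((i : ℝ) - 1))) *
        Real.sqrt ((2 : ℝ) ^ (2 * (i : ℝ) - 3) * ((i : ℝ) - 1) / (N : ℝ) ^ 3)
      ≤ (Nat.gcd (N.choose i) (N.choose j) : ℝ) ∧
    Real.sqrt N * (2 : ℝ) ^ ((i : ℝ) - 7 / 2) / ((i : ℝ) * Real.sqrt ((i : ℝ) - 1))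
      ≤ (Nat.gcd (N.choose i) (N.choose j) : ℝ) := by
  have hiN : i ≤ N := by omega
  -- naturals setup
  set g := Nat.gcd (N.choose i) (N.choose j) with hgdef
  set a := (N.choose i) / g with hadef
  have hCNi : 0 < N.choose i := Nat.choose_pos hiN
  have hga : g * a = N.choose i := Nat.mul_div_cancel' (Nat.gcd_dvd_left _ _)
  have hg0 : 0 < g := by
    rcases Nat.eq_zero_or_pos g with h | h
    · rw [h, zero_mul] at hga; omega
    · exact h
  have ha0 : 0 < a := by
    rcases Nat.eq_zero_or_pos a with h | h
    · rw [h, mul_zero] at hga; omega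
    · exact h
  have hCj : 0 < j.choose (i-1) := Nat.choose_pos (by omega)
  have hCn : 0 < (N-j).choose (i-1) := Nat.choose_pos (by omega)
  have hMpos : 0 < (i-1) * ((N-(i-1)) * (j.choose (i-1) * (N-j).choose (i-1))) := by
    have h1 : 0 < i - 1 := by omega
    have h2 : 0 < N - (i-1) := by omega
    positivity
  have haM : a^2 ≤ (i-1) * ((N-(i-1)) * (j.choose (i-1) * (N-j).choose (i-1))) :=
    Nat.le_of_dvd hMpos (asq_dvd i j N hi hij hjN)
  -- real preliminaries
  have hiR2 : (2:ℝ) ≤ (i:ℝ) := by exact_mod_cast hi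
  have hNR4 : (4:ℝ) ≤ (N:ℝ) := by exact_mod_cast (show 4 ≤ N by omega)
  have hNiR : (i:ℝ) ≤ (N:ℝ) := by exact_mod_cast hiN
  have h2iN : 2*(i:ℝ) ≤ (N:ℝ) := by exact_mod_cast (show 2*i ≤ N by omega)
  have hi1 : (0:ℝ) < (i:ℝ) - 1 := by linarith
  have hi0 : (0:ℝ) < (i:ℝ) := by linarith
  have hN0 : (0:ℝ) < (N:ℝ) := by linarith
  have hA1pos : (0:ℝ) < (N:ℝ) - i + 1 := by linarith
  have hA2pos : (0:ℝ) < (N:ℝ) - i + 2 := by linarith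
  have ha0R : (0:ℝ) < (a:ℝ) := by exact_mod_cast ha0
  have hCNiRposX : (0:ℝ) < (N.choose i : ℝ) := by exact_mod_cast hCNi
  -- the npow version of the rpow term
  have hT : (2 : ℝ) ^ (2 * (i:ℝ) - 3) = ((2:ℝ))^((2*i-3 : ℕ)) := by
    have h1 : (2:ℝ) ^ (2*(i:ℝ)-3) = (2:ℝ) ^ (((2*i-3 : ℕ)):ℝ) := by
      congr 1
      push_cast [Nat.cast_sub (show 3 ≤ 2*i by omega)]
      ring
    rw [h1, Real.rpow_natCast]
  have hTpos : (0:ℝ) < ((2:ℝ))^((2*i-3 : ℕ)) := by positivity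
  -- cast of the key natural-number inequality
  have hclaim : ((N:ℝ)-i+2)^2 * ((N:ℝ)-i+1)^3 * ((2:ℝ))^((2*i-3 : ℕ))
      * ((j.choose (i-1) : ℝ) * ((N-j).choose (i-1) : ℝ))
      ≤ (i:ℝ)^2 * (N:ℝ)^3 * ((N.choose i : ℝ))^2 := by
    have h := (Nat.cast_le (α := ℝ)).mpr (claim_nat i j N hi hij hjN)
    push_cast [Nat.cast_sub hiN] at h
    convert h using 2 <;> ring
  -- cast of the divisibility bound
  have haMR : (a:ℝ)^2 ≤ ((i:ℝ)-1) * (((N:ℝ)-i+1) * ((j.choose (i-1) : ℝ) * ((N-j).choose (i-1) : ℝ))) := by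
    have h := (Nat.cast_le (α := ℝ)).mpr haM
    push_cast [Nat.cast_sub (show 1 ≤ i by omega), Nat.cast_sub (show i-1 ≤ N by omega)] at h
    calc (a:ℝ)^2 ≤ ((i:ℝ)-1) * (((N:ℝ)-((i:ℝ)-1)) * ((j.choose (i-1) : ℝ) * ((N-j).choose (i-1) : ℝ))) := h
    _ = ((i:ℝ)-1) * (((N:ℝ)-i+1) * ((j.choose (i-1) : ℝ) * ((N-j).choose (i-1) : ℝ))) := by ring
  have hMRnn : (0:ℝ) ≤ ((i:ℝ)-1) * (((N:ℝ)-i+1) * ((j.choose (i-1) : ℝ) * ((N-j).choose (i-1) : ℝ))) := by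
    have c1 : (0:ℝ) ≤ (j.choose (i-1) : ℝ) := Nat.cast_nonneg _
    have c2 : (0:ℝ) ≤ ((N-j).choose (i-1) : ℝ) := Nat.cast_nonneg _
    have := le_of_lt hi1
    have := le_of_lt hA1pos
    positivity
  have hQnn : (0:ℝ) ≤ ((2:ℝ))^((2*i-3 : ℕ)) * ((i:ℝ)-1) / (N:ℝ)^3 := by
    apply div_nonneg _ (by positivity)
    exact mul_nonneg (le_of_lt hTpos) (le_of_lt hi1)
  have hRnn : (0:ℝ) ≤ ((N:ℝ)-i+2) * ((N:ℝ)-i+1) / ((i:ℝ) * ((i:ℝ)-1)) := by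
    apply div_nonneg (by positivity) (by positivity)
  -- a ≤ sqrt(M)
  have ha_sqrt : (a:ℝ) ≤ Real.sqrt (((i:ℝ)-1) * (((N:ℝ)-i+1) * ((j.choose (i-1) : ℝ) * ((N-j).choose (i-1) : ℝ)))) := by
    rw [show (a:ℝ) = Real.sqrt ((a:ℝ)^2) from (Real.sqrt_sq (le_of_lt ha0R)).symm]
    exact Real.sqrt_le_sqrt haMR
  -- bound 1 with npow form
  have key1 : (((N:ℝ)-i+2) * ((N:ℝ)-i+1) / ((i:ℝ)*((i:ℝ)-1)))
      * Real.sqrt (((2:ℝ))^((2*i-3 : ℕ)) * ((i:ℝ)-1) / (N:ℝ)^3) ≤ (g:ℝ) := by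
    have hmain : (((N:ℝ)-i+2) * ((N:ℝ)-i+1) / ((i:ℝ)*((i:ℝ)-1)))
        * Real.sqrt (((2:ℝ))^((2*i-3 : ℕ)) * ((i:ℝ)-1) / (N:ℝ)^3) * (a:ℝ)
        ≤ (N.choose i : ℝ) := by
      have step1 : (((N:ℝ)-i+2) * ((N:ℝ)-i+1) / ((i:ℝ)*((i:ℝ)-1)))
          * Real.sqrt (((2:ℝ))^((2*i-3 : ℕ)) * ((i:ℝ)-1) / (N:ℝ)^3) * (a:ℝ)
          ≤ (((N:ℝ)-i+2) * ((N:ℝ)-i+1) / ((i:ℝ)*((i:ℝ)-1)))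
          * Real.sqrt ((((2:ℝ))^((2*i-3 : ℕ)) * ((i:ℝ)-1) / (N:ℝ)^3)
              * (((i:ℝ)-1) * (((N:ℝ)-i+1) * ((j.choose (i-1) : ℝ) * ((N-j).choose (i-1) : ℝ))))) := by
        rw [mul_assoc, Real.sqrt_mul hQnn]
        apply mul_le_mul_of_nonneg_left _ hRnn
        exact mul_le_mul_of_nonneg_left ha_sqrt (Real.sqrt_nonneg _)
      refine step1.trans ?_
      apply sq_le_sq'' (mul_nonneg hRnn (Real.sqrt_nonneg _)) (le_of_lt hCNiRposX)
      rw [mul_pow, Real.sq_sqrt (mul_nonneg hQnn hMRnn)]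
      have e : (((N:ℝ)-i+2) * ((N:ℝ)-i+1) / ((i:ℝ)*((i:ℝ)-1)))^2
          * ((((2:ℝ))^((2*i-3 : ℕ)) * ((i:ℝ)-1) / (N:ℝ)^3)
              * (((i:ℝ)-1) * (((N:ℝ)-i+1) * ((j.choose (i-1) : ℝ) * ((N-j).choose (i-1) : ℝ)))))
          = (((N:ℝ)-i+2)^2 * ((N:ℝ)-i+1)^3 * ((2:ℝ))^((2*i-3 : ℕ))
              * ((j.choose (i-1) : ℝ) * ((N-j).choose (i-1) : ℝ))) / ((i:ℝ)^2 * (N:ℝ)^3) := by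
        field_simp
      rw [e, div_le_iff₀ (by positivity)]
      exact hclaim.trans_eq (by ring)
    have hcast : (N.choose i : ℝ) = (g:ℝ) * (a:ℝ) := by exact_mod_cast hga.symm
    rw [hcast] at hmain
    exact le_of_mul_le_mul_right hmain ha0R
  have key1' : (((N:ℝ)-i+2) * ((N:ℝ)-i+1) / ((i:ℝ)*((i:ℝ)-1)))
      * Real.sqrt ((2:ℝ)^(2*(i:ℝ)-3) * ((i:ℝ)-1) / (N:ℝ)^3) ≤ (g:ℝ) := by
    rw [hT]; exact key1
  refine ⟨key1', le_trans ?_ key1'⟩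
  -- second bound: B2 ≤ B1
  rw [hT]
  have hB2nn : (0:ℝ) ≤ Real.sqrt N * (2:ℝ)^((i:ℝ)-7/2) / ((i:ℝ) * Real.sqrt ((i:ℝ)-1)) := by
    apply div_nonneg _ (mul_nonneg (le_of_lt hi0) (Real.sqrt_nonneg _))
    exact mul_nonneg (Real.sqrt_nonneg _) (le_of_lt (Real.rpow_pos_of_pos (by norm_num) _))
  apply sq_le_sq'' hB2nn (mul_nonneg hRnn (Real.sqrt_nonneg _))
  have hU : ((2:ℝ)^((i:ℝ)-7/2))^2 = (2:ℝ)^(2*(i:ℝ)-7) := by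
    rw [sq, ← Real.rpow_add (by norm_num : (0:ℝ) < 2)]
    congr 1
    ring
  have h16 : (2:ℝ)^((4:ℝ)) = 16 := by
    rw [show (4:ℝ) = ((4:ℕ):ℝ) by norm_num, Real.rpow_natCast]
    norm_num
  have hTsplit : ((2:ℝ))^((2*i-3:ℕ)) = (2:ℝ)^(2*(i:ℝ)-7) * 16 := by
    rw [← hT, show 2*(i:ℝ)-3 = (2*(i:ℝ)-7) + 4 by ring,
      Real.rpow_add (by norm_num : (0:ℝ) < 2), h16]
  have eB2 : (Real.sqrt N * (2:ℝ)^((i:ℝ)-7/2) / ((i:ℝ) * Real.sqrt ((i:ℝ)-1)))^2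
      = (N:ℝ) * (2:ℝ)^(2*(i:ℝ)-7) / ((i:ℝ)^2*((i:ℝ)-1)) := by
    rw [div_pow, mul_pow, mul_pow, Real.sq_sqrt (le_of_lt hN0),
      Real.sq_sqrt (le_of_lt hi1), hU]
  rw [eB2, mul_pow, Real.sq_sqrt hQnn, hTsplit]
  have hupos : (0:ℝ) < (2:ℝ)^(2*(i:ℝ)-7) := Real.rpow_pos_of_pos (by norm_num) _
  have hden1 : (0:ℝ) < (i:ℝ)^2*((i:ℝ)-1) := mul_pos (pow_pos hi0 2) hi1
  have hden2 : (0:ℝ) < ((i:ℝ)*((i:ℝ)-1))^2 * (N:ℝ)^3 := mul_pos (pow_pos (mul_pos hi0 hi1) 2) (pow_pos hN0 3)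
  rw [div_pow, div_mul_div_comm, div_le_div_iff₀ hden1 hden2]
  have hN2 : (N:ℝ)^2 ≤ 4*(((N:ℝ)-i+2)*((N:ℝ)-i+1)) := by nlinarith [h2iN, hNiR, hiR2]
  have hN4 : (N:ℝ)^4 ≤ 16*((((N:ℝ)-i+2)*((N:ℝ)-i+1)))^2 := by
    nlinarith [hN2, sq_nonneg ((N:ℝ)^2), mul_pos hA2pos hA1pos, pow_pos hN0 2]
  have hc : (0:ℝ) ≤ (2:ℝ)^(2*(i:ℝ)-7)*(i:ℝ)^2*((i:ℝ)-1)^2 := by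
    apply mul_nonneg (mul_nonneg (le_of_lt hupos) (sq_nonneg _)) (sq_nonneg _)
  nlinarith [mul_le_mul_of_nonneg_left hN4 hc]
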